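/- Let A be a 3-edge-connected component of a finite multigraph G. Then every connected component Z of G - A has at most two edges of G joining it to A. -/

import Mathlib

namespace TCW

/-- A multigraph: a type of vertices, a type of edges, and an incidence map
assigning to each edge its (unordered) pair of endpoints. -/
structure Multigraph (V E : Type) where
  inc : E → Sym2 V

namespace Multigraph

variable {V E : Type}

/-- The multigraph has no loops. -/
def Loopless (G : Multigraph V E) : Prop := ∀ e : E, ¬ (G.inc e).IsDiag

/-- Walks in a multigraph. -/
inductive Walk (G : Multigraph V E) : V → V → Type where
  | nil (v : V) : Walk G v v
  | cons {u v w : V} (e : E) (he : G.inc e = s(u, v)) (tail : Walk G v w) : Walk G u w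

namespace Walk

variable {G : Multigraph V E}

/-- The list of edges traversed by a walk. -/
def edges : ∀ {u v : V}, G.Walk u v → List E
  | _, _, .nil _ => []
  | _, _, .cons e _ p => e :: p.edges

/-- The list of vertices visited by a walk (in order). -/
def support : ∀ {u v : V}, G.Walk u v → List V
  | u, _, .nil _ => [u]
  | u, _, .cons _ _ p => u :: p.support

/-- A walk is a path if it visits no vertex twice. -/
def IsPath {u v : V} (p : G.Walk u v) : Prop := p.support.Nodup

/-- A closed walk is a cycle if it is nonempty, repeats no edge, and its
vertices are pairwise distinct except for the common endpoint. -/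
def IsCycle {u : V} (p : G.Walk u u) : Prop :=
  p.edges ≠ [] ∧ p.edges.Nodup ∧ p.support.tail.Nodup

end Walk

/-- Two walks are edge-disjoint if they share no edge. -/
def EdgeDisjoint {G : Multigraph V E} {u v u' v' : V}
    (p : G.Walk u v) (q : G.Walk u' v') : Prop :=
  ∀ e : E, e ∈ p.edges → e ∉ q.edges

/-- There exist three pairwise edge-disjoint paths from `u` to `v`. -/
def ThreePaths (G : Multigraph V E) (u v : V) : Prop :=
  ∃ (p₁ p₂ p₃ : G.Walk u v), p₁.IsPath ∧ p₂.IsPath ∧ p₃.IsPath ∧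
    EdgeDisjoint p₁ p₂ ∧ EdgeDisjoint p₁ p₃ ∧ EdgeDisjoint p₂ p₃

/-- `u` and `v` are 3-edge-connected: they are equal or joined by three
pairwise edge-disjoint paths. -/
def ThreeEC (G : Multigraph V E) (u v : V) : Prop := u = v ∨ ThreePaths G u v

/-- The set of edges crossing the vertex set `A` (i.e. the cut `δ(A)`). -/
def delta (G : Multigraph V E) (A : Set V) : Set E :=
  {e | ∃ x y, G.inc e = s(x, y) ∧ x ∈ A ∧ y ∉ A}

/-- The edge sets of cycles of `G`. -/
def cycleSets (G : Multigraph V E) : Set (Set E) :=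
  {C | ∃ (u : V) (p : G.Walk u u), p.IsCycle ∧ C = {e | e ∈ p.edges}}

/-- A cactus: any two distinct cycles are edge-disjoint (equivalently, every
2-connected block is a single edge or a cycle). -/
def IsCactus (G : Multigraph V E) : Prop :=
  ∀ C₁ ∈ G.cycleSets, ∀ C₂ ∈ G.cycleSets, C₁ ≠ C₂ → C₁ ∩ C₂ = ∅

/-- The quotient multigraph of `G` by a setoid on vertices: vertices are the
equivalence classes, and every edge of `G` whose endpoints lie in different
classes gives one edge; edges inside a class are discarded. -/
def quot (G : Multigraph V E) (s : Setoid V) :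
    Multigraph (Quotient s) {e : E // ¬ (Sym2.map (Quotient.mk s) (G.inc e)).IsDiag} :=
  ⟨fun e => Sym2.map (Quotient.mk s) (G.inc e.1)⟩

/-- The setoid of 3-edge-connectedness (its classes are the
3-edge-connected components). -/
def tccSetoid (G : Multigraph V E) : Setoid V := Relation.EqvGen.setoid (ThreeEC G)

/-- `H` is an immersion of `G`: vertices of `H` map injectively to vertices
of `G`, and edges of `H` map to pairwise edge-disjoint paths of `G`, the path
of an edge connecting the images of its endpoints. -/
def IsImmersion {V₁ E₁ V₂ E₂ : Type} (H : Multigraph V₁ E₁) (G : Multigraph V₂ E₂) : Prop :=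
  ∃ (f : V₁ → V₂) (P : E₁ → (u : V₂) × (v : V₂) × G.Walk u v),
    Function.Injective f ∧
    (∀ e : E₁, Sym2.map f (H.inc e) = s((P e).1, (P e).2.1)) ∧
    (∀ e : E₁, (P e).2.2.IsPath) ∧
    (∀ e₁ e₂ : E₁, e₁ ≠ e₂ → EdgeDisjoint (P e₁).2.2 (P e₂).2.2)

section Torso

variable (G : Multigraph V E) (A : Set V)

/-- Two vertices outside `A` are related if joined by a walk avoiding `A`. -/
def compRel (x y : {v : V // v ∉ A}) : Prop :=
  ∃ p : G.Walk x.1 y.1, ∀ w ∈ p.support, w ∉ A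

/-- The setoid whose classes are the connected components of `G - A`. -/
def compSetoid : Setoid {v : V // v ∉ A} := Relation.EqvGen.setoid (G.compRel A)

/-- The component `Z` of `G - A` is attached to the vertex `a ∈ A` by some edge. -/
def Attached (Z : Quotient (G.compSetoid A)) (a : {v : V // v ∈ A}) : Prop :=
  ∃ (e : E) (z : {v : V // v ∉ A}), Quotient.mk (G.compSetoid A) z = Z ∧ G.inc e = s(a.1, z.1)

/-- Edges of `G` with both endpoints in `A`, recorded together with their
endpoints as vertices of the torso. -/
def InnerE : Type :=
  {q : E × Sym2 {v : V // v ∈ A} // G.inc q.1 = Sym2.map Subtype.val q.2}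

/-- Replacement edges: one for each connected component of `G - A` having
exactly two (distinct) neighbours in `A`; its endpoints are those neighbours. -/
def RepE : Type :=
  {q : Quotient (G.compSetoid A) × Sym2 {v : V // v ∈ A} //
    ¬ q.2.IsDiag ∧ {a | a ∈ q.2} = {a | G.Attached A q.1 a}}

/-- The torso of `A` in `G`: keep the edges inside `A`, and for each
connected component of `G - A` with exactly two neighbours in `A`, add a
replacement edge between those neighbours. -/
def torso : Multigraph {v : V // v ∈ A} (G.InnerE A ⊕ G.RepE A) :=
  ⟨Sum.elim (fun q => q.1.2) (fun q => q.1.2)⟩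

end Torso

end Multigraph

open Multigraph

/-- A tree-cut decomposition of `G` with nodes `N`: a tree on `N` together
with a near-partition of the vertices of `G` into bags indexed by `N`. -/
structure TreeCutDecomp (G : Multigraph V E) (N : Type) where
  tree : SimpleGraph N
  isTree : tree.IsTree
  bag : N → Set V
  bag_disjoint : ∀ n₁ n₂ : N, n₁ ≠ n₂ → bag n₁ ∩ bag n₂ = ∅
  bag_covers : ∀ v : V, ∃ t : N, v ∈ bag t

namespace TreeCutDecomp

variable {V E N : Type} {G : Multigraph V E}

/-- The adhesion of the tree edge `n₁n₂`: all edges of `G` whose endpoints lie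
in bags of nodes in different components of the tree minus that edge. -/
def adhE (D : TreeCutDecomp G N) (n₁ n₂ : N) : Set E :=
  {e | ∃ (x y : V) (p q : N), G.inc e = s(x, y) ∧ x ∈ D.bag p ∧ y ∈ D.bag q ∧
    ¬ (D.tree.deleteEdges {s(n₁, n₂)}).Reachable p q}

/-- The adhesion of a node: the union of the adhesions of the bold
(adhesion of size at least 3) tree edges incident to it. -/
def adhN (D : TreeCutDecomp G N) (t : N) : Set E :=
  {e | ∃ n : N, D.tree.Adj n t ∧ 3 ≤ (D.adhE n t).ncard ∧ e ∈ D.adhE n t}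

/-- The decomposition has adhesion-width at most `a`. -/
def AdhWidthLE (D : TreeCutDecomp G N) (a : ℕ) : Prop := ∀ t : N, (D.adhN t).ncard ≤ a

/-- The decomposition has bag-width at most `b`. -/
def BagWidthLE (D : TreeCutDecomp G N) (b : ℕ) : Prop := ∀ t : N, (D.bag t).ncard ≤ b

/-- The adhesion-width: the maximum size of a node adhesion. -/
noncomputable def adhWidth [Fintype N] (D : TreeCutDecomp G N) : ℕ :=
  Finset.univ.sup fun t : N => (D.adhN t).ncard

/-- The bag-width: the maximum size of a bag. -/
noncomputable def bagWidth [Fintype N] (D : TreeCutDecomp G N) : ℕ :=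
  Finset.univ.sup fun t : N => (D.bag t).ncard

open Classical in
/-- GPRTW's width: the maximum over tree edges of the adhesion size, and over
nodes `t` of `|X_t|` plus the number of bold tree edges incident to `t`. -/
noncomputable def gprtwWidth [Fintype N] (D : TreeCutDecomp G N) : ℕ :=
  max
    (Finset.univ.sup fun p : N × N =>
      if D.tree.Adj p.1 p.2 then (D.adhE p.1 p.2).ncard else 0)
    (Finset.univ.sup fun t : N =>
      (D.bag t).ncard + {n : N | D.tree.Adj n t ∧ 3 ≤ (D.adhE n t).ncard}.ncard)

end TreeCutDecomp

/-- A slab in `G`: a connected subgraph (given by its vertex and edge sets)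
together with a nonempty core that is 3-edge-connected in `G`. -/
structure Slab (G : Multigraph V E) where
  verts : Set V
  edgeSet : Set E
  edge_mem : ∀ e ∈ edgeSet, ∀ x ∈ G.inc e, x ∈ verts
  conn : ∀ x ∈ verts, ∀ y ∈ verts, ∃ p : G.Walk x y,
    (∀ w ∈ p.support, w ∈ verts) ∧ (∀ e ∈ p.edges, e ∈ edgeSet)
  core : Set V
  core_sub : core ⊆ verts
  core_nonempty : core.Nonempty
  core_tec : ∀ x ∈ core, ∀ y ∈ core, ThreeEC G x y

/-- A set `F` of edges disconnects a slab if two core vertices lie in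
different components of the slab minus `F`. -/
def Slab.Disconnects {G : Multigraph V E} (F : Set E) (s : Slab G) : Prop :=
  ∃ x ∈ s.core, ∃ y ∈ s.core, ¬ ∃ p : G.Walk x y,
    (∀ w ∈ p.support, w ∈ s.verts) ∧ (∀ e ∈ p.edges, e ∈ s.edgeSet ∧ e ∉ F)

/-- A bramble: a family of pairwise touching slabs (cores pairwise intersect). -/
def IsBramble {G : Multigraph V E} (B : Set (Slab G)) : Prop :=
  ∀ s₁ ∈ B, ∀ s₂ ∈ B, (s₁.core ∩ s₂.core).Nonempty

/-- The bramble has adhesion-order at least `a`: every edge set disconnecting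
all its slabs has at least `a` edges. -/
def AdhOrderGE {G : Multigraph V E} (B : Set (Slab G)) (a : ℕ) : Prop :=
  ∀ F : Set E, (∀ s ∈ B, Slab.Disconnects F s) → a ≤ F.ncard

/-- The bramble has bag-order at least `b`: every core has at least `b` vertices. -/
def BagOrderGE {G : Multigraph V E} (B : Set (Slab G)) (b : ℕ) : Prop :=
  ∀ s ∈ B, b ≤ s.core.ncard

/-- An `(a,b)`-tangle: a consistent orientation of all edge separations of
order `< a` avoiding the collection `Σ_{a,b}` of small stars. An oriented
separation `(A, B)` is represented by its first side `A` (so `B = Aᶜ`). -/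
def IsTangle (G : Multigraph V E) (a b : ℕ) (L : Set (Set V)) : Prop :=
  (∀ A ∈ L, (G.delta A).ncard < a) ∧
  (∀ A : Set V, (G.delta A).ncard < a → (A ∈ L ↔ Aᶜ ∉ L)) ∧
  (∀ A ∈ L, ∀ C ∈ L, (Aᶜ ∩ Cᶜ).Nonempty) ∧
  (∀ σ : Set (Set V), σ ⊆ L → σ.Nonempty →
    (∀ A ∈ σ, ∀ C ∈ σ, A ≠ C → A ∩ C = ∅) →
    ¬ ((⋃ A ∈ {A ∈ σ | 3 ≤ (G.delta A).ncard}, G.delta A).ncard < a ∧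
       (⋂ A ∈ σ, Aᶜ).ncard < b))


namespace Aux
open Multigraph

variable {V E : Type} {G : Multigraph V E}

def wapp : ∀ {u v w : V}, G.Walk u v → G.Walk v w → G.Walk u w
  | _, _, _, .nil _, q => q
  | _, _, _, .cons e he p, q => .cons e he (wapp p q)

lemma start_mem_support : ∀ {u v : V} (p : G.Walk u v), u ∈ p.support := by
  intro u v p; cases p <;> simp [Walk.support]

lemma end_mem_support : ∀ {u v : V} (p : G.Walk u v), v ∈ p.support
  | _, _, .nil _ => by simp [Walk.support]
  | _, _, .cons e he p => by simp [Walk.support]; exact Or.inr (end_mem_support p)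

lemma wapp_edges : ∀ {u v w : V} (p : G.Walk u v) (q : G.Walk v w),
    (wapp p q).edges = p.edges ++ q.edges
  | _, _, _, .nil _, q => rfl
  | _, _, _, .cons e he p, q => by simp [wapp, Walk.edges, wapp_edges p q]

lemma mem_wapp_support : ∀ {u v w : V} (p : G.Walk u v) (q : G.Walk v w) (x : V),
    x ∈ (wapp p q).support ↔ x ∈ p.support ∨ x ∈ q.support
  | _, _, _, .nil _, q, x => by
      simp [wapp, Walk.support]
      intro h; subst h; exact start_mem_support q
  | _, _, _, .cons e he p, q, x => by
      simp [wapp, Walk.support, mem_wapp_support p q x, or_assoc]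

def wrev : ∀ {u v : V}, G.Walk u v → G.Walk v u
  | _, _, .nil v => .nil v
  | _, _, .cons e he p => wapp (wrev p) (.cons e (he.trans (Sym2.eq_swap)) (.nil _))

lemma mem_wrev_edges : ∀ {u v : V} (p : G.Walk u v) (e : E),
    e ∈ (wrev p).edges ↔ e ∈ p.edges
  | _, _, .nil _, e => Iff.rfl
  | _, _, .cons e' he p, e => by
      simp [wrev, wapp_edges, Walk.edges, mem_wrev_edges p e, or_comm]

lemma mem_wrev_support : ∀ {u v : V} (p : G.Walk u v) (x : V),
    x ∈ (wrev p).support ↔ x ∈ p.support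
  | _, _, .nil _, x => Iff.rfl
  | _, _, .cons e' he p, x => by
      simp [wrev, mem_wapp_support, Walk.support, mem_wrev_support p x, or_comm]
      constructor
      · rintro ((h | h) | h)
        exacts [Or.inl h, Or.inr (h ▸ start_mem_support p), Or.inr h]
      · rintro (h | h)
        exacts [Or.inl (Or.inl h), Or.inr h]

/-- membership of an edge gives its traversal endpoints in the support. -/
lemma edge_endpoints_mem : ∀ {u v : V} (p : G.Walk u v) (e : E), e ∈ p.edges →
    ∃ x y, G.inc e = s(x, y) ∧ x ∈ p.support ∧ y ∈ p.support
  | _, _, .nil _, e => by simp [Walk.edges]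
  | _, _, .cons e' he p, e => by
      intro hmem
      simp [Walk.edges] at hmem
      rcases hmem with h | h
      · subst h
        exact ⟨_, _, he, by simp [Walk.support], by
          simp [Walk.support]; exact Or.inr (start_mem_support p)⟩
      · obtain ⟨x, y, h1, h2, h3⟩ := edge_endpoints_mem p e h
        exact ⟨x, y, h1, by simp [Walk.support, h2], by simp [Walk.support, h3]⟩

/-- a walk from inside `S` to outside `S` uses a crossing edge. -/
lemma walk_exit : ∀ {u v : V} (p : G.Walk u v) (S : Set V), u ∈ S → v ∉ S →
    ∃ x y e, x ∈ S ∧ y ∉ S ∧ G.inc e = s(x, y) ∧ e ∈ p.edges ∧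
      x ∈ p.support ∧ y ∈ p.support
  | _, _, .nil _, S, hu, hv => absurd hu hv
  | _, _, .cons (u := u) (v := v') e he p, S, hu, hv => by
      by_cases h : v' ∈ S
      · obtain ⟨x, y, e', h1, h2, h3, h4, h5, h6⟩ := walk_exit p S h hv
        exact ⟨x, y, e', h1, h2, h3, by simp [Walk.edges, h4],
          by simp [Walk.support, h5], by simp [Walk.support, h6]⟩
      · exact ⟨u, v', e, hu, h, he, by simp [Walk.edges],
          by simp [Walk.support], by simp [Walk.support]; exact Or.inr (start_mem_support p)⟩

/-- every vertex on a walk is reachable by a prefix. -/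
lemma exists_prefix : ∀ {u v : V} (p : G.Walk u v) (x : V), x ∈ p.support →
    ∃ q : G.Walk u x, (∀ e ∈ q.edges, e ∈ p.edges) ∧ (∀ s ∈ q.support, s ∈ p.support)
  | _, _, .nil w, x, hx => by
      simp [Walk.support] at hx; subst hx
      exact ⟨.nil _, by simp [Walk.edges], by simp [Walk.support]⟩
  | _, _, .cons (u := u) (v := v') e he p, x, hx => by
      simp [Walk.support] at hx
      rcases hx with h | h
      · subst h
        exact ⟨.nil _, by simp [Walk.edges], by simp [Walk.support]⟩
      · obtain ⟨q, h1, h2⟩ := exists_prefix p x h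
        exact ⟨.cons e he q, by
            intro e' he'; simp [Walk.edges] at he' ⊢
            rcases he' with h' | h'
            · exact Or.inl h'
            · exact Or.inr (h1 e' h'), by
            intro s hs; simp [Walk.support] at hs ⊢
            rcases hs with h' | h'
            · exact Or.inl h'
            · exact Or.inr (h2 s h')⟩

/-- step-predicate satisfaction along a walk. -/
def Sat (Q : V → V → E → Prop) : ∀ {u v : V}, G.Walk u v → Prop
  | _, _, .nil _ => True
  | _, _, .cons (u := u) (v := v') e _ p => Q u v' e ∧ Sat Q p

lemma Sat_wapp {Q : V → V → E → Prop} : ∀ {u v w : V} (p : G.Walk u v) (q : G.Walk v w),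
    Sat Q p → Sat Q q → Sat Q (wapp p q)
  | _, _, _, .nil _, q, _, hq => hq
  | _, _, _, .cons e he p, q, hp, hq => ⟨hp.1, Sat_wapp p q hp.2 hq⟩

lemma Sat_mono {Q Q' : V → V → E → Prop} : ∀ {u v : V} (p : G.Walk u v),
    (∀ a b e, e ∈ p.edges → Q a b e → Q' a b e) → Sat Q p → Sat Q' p
  | _, _, .nil _, _, _ => trivial
  | _, _, .cons e he p, h, hp =>
      ⟨h _ _ _ (by simp [Walk.edges]) hp.1,
       Sat_mono p (fun a b e' he' => h a b e' (by simp [Walk.edges, he'])) hp.2⟩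

lemma Sat_edge {Q : V → V → E → Prop} : ∀ {u v : V} (p : G.Walk u v), Sat Q p →
    ∀ e ∈ p.edges, ∃ a b, Q a b e
  | _, _, .nil _, _, e => by simp [Walk.edges]
  | _, _, .cons e' he p, hp, e => by
      intro hmem; simp [Walk.edges] at hmem
      rcases hmem with h | h
      · subst h; exact ⟨_, _, hp.1⟩
      · exact Sat_edge p hp.2 e h

/-- suffix of a walk starting at a vertex of its support. -/
lemma exists_suffix (Q : V → V → E → Prop) :
    ∀ {u v : V} (p : G.Walk u v) (x : V), x ∈ p.support →
    ∃ q : G.Walk x v, q.support.Sublist p.support ∧ (∀ e ∈ q.edges, e ∈ p.edges) ∧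
      (Sat Q p → Sat Q q)
  | _, _, .nil w, x, hx => by
      simp [Walk.support] at hx; subst hx
      exact ⟨.nil _, by simp [Walk.support], by simp [Walk.edges], fun h => h⟩
  | _, _, .cons (u := u) (v := v') e he p, x, hx => by
      simp [Walk.support] at hx
      rcases hx with h | h
      · subst h
        exact ⟨.cons e he p, List.Sublist.refl _, fun _ h => h, fun h => h⟩
      · obtain ⟨q, h1, h2, h3⟩ := exists_suffix Q p x h
        exact ⟨q, by simp [Walk.support]; exact h1.trans (List.sublist_cons_self _ _),
          fun e' he' => by simp [Walk.edges]; exact Or.inr (h2 e' he'),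
          fun hp => h3 hp.2⟩

/-- shortcut a walk to one with no repeated vertices. -/
lemma exists_path_sub (Q : V → V → E → Prop) :
    ∀ {u v : V} (p : G.Walk u v), Sat Q p →
    ∃ q : G.Walk u v, q.support.Nodup ∧ Sat Q q ∧ (∀ e ∈ q.edges, e ∈ p.edges)
  | _, _, .nil w, _ => ⟨.nil w, by simp [Walk.support], trivial, by simp [Walk.edges]⟩
  | _, _, .cons (u := u) (v := v') e he p, hp => by
      obtain ⟨q, h1, h2, h3⟩ := exists_path_sub Q p hp.2
      by_cases hu : u ∈ q.support
      · obtain ⟨r, r1, r2, r3⟩ := exists_suffix Q q u hu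
        exact ⟨r, r1.nodup h1, r3 h2,
          fun e' he' => by simp [Walk.edges]; exact Or.inr (h3 e' (r2 e' he'))⟩
      · exact ⟨.cons e he q, by simp [Walk.support, List.nodup_cons]; exact ⟨hu, h1⟩,
          ⟨hp.1, h2⟩, fun e' he' => by
            simp [Walk.edges] at he' ⊢
            rcases he' with h | h
            · exact Or.inl h
            · exact Or.inr (h3 e' h)⟩

/-- a walk with no repeated vertices has no repeated edges. -/
lemma edges_nodup_of_support_nodup : ∀ {u v : V} (p : G.Walk u v),
    p.support.Nodup → p.edges.Nodup
  | _, _, .nil _, _ => by simp [Walk.edges]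
  | _, _, .cons (u := u) (v := v') e he p, h => by
      simp [Walk.support, List.nodup_cons] at h
      simp [Walk.edges, List.nodup_cons]
      refine ⟨fun hmem => ?_, edges_nodup_of_support_nodup p h.2⟩
      obtain ⟨x, y, h1, h2, h3⟩ := edge_endpoints_mem p e hmem
      rw [he] at h1
      rcases Sym2.eq_iff.mp h1 with ⟨rfl, rfl⟩ | ⟨rfl, rfl⟩
      · exact h.1 h2
      · exact h.1 h3

end Aux
section Flow
namespace Aux
open Multigraph
open scoped Classical

variable {V E : Type} {G : Multigraph V E}

noncomputable def tm (x : V) (o : Option (V × V)) : ℤ :=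
  (if o.map Prod.fst = some x then 1 else 0) - (if o.map Prod.snd = some x then 1 else 0)

lemma tm_none (x : V) : tm x (none : Option (V × V)) = 0 := by simp [tm]

lemma tm_some (x a b : V) :
    tm x (some (a, b)) = (if x = a then 1 else 0) - (if x = b then 1 else 0) := by
  simp [tm, eq_comm]

noncomputable def dd [Fintype E] (f : E → Option (V × V)) (x : V) : ℤ :=
  ∑ e : E, tm x (f e)

def Vld (G : Multigraph V E) (f : E → Option (V × V)) : Prop :=
  ∀ e a b, f e = some (a, b) → G.inc e = s(a, b)

lemma dd_update [Fintype E] (f : E → Option (V × V)) (e₀ : E) (o : Option (V × V)) (x : V) :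
    dd (Function.update f e₀ o) x = dd f x - tm x (f e₀) + tm x o := by
  unfold dd
  rw [← Finset.add_sum_erase _ (fun e => tm x (Function.update f e₀ o e)) (Finset.mem_univ e₀),
      ← Finset.add_sum_erase _ (fun e => tm x (f e)) (Finset.mem_univ e₀)]
  rw [Function.update_self]
  have h : ∑ e ∈ Finset.univ.erase e₀, tm x (Function.update f e₀ o e)
      = ∑ e ∈ Finset.univ.erase e₀, tm x (f e) :=
    Finset.sum_congr rfl (fun e he => by rw [Function.update_of_ne (Finset.ne_of_mem_erase he)])
  rw [h]; ring

def Qres (f : E → Option (V × V)) : V → V → E → Prop :=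
  fun a b e => f e = none ∨ f e = some (b, a)

def Qdir (f : E → Option (V × V)) : V → V → E → Prop :=
  fun a b e => f e = some (a, b)

lemma augment [Fintype E] :
    ∀ {a v : V} (p : G.Walk a v) (f : E → Option (V × V)), Vld G f → Sat (Qres f) p →
    p.edges.Nodup →
    ∃ f', Vld G f' ∧
      ∀ x, dd f' x = dd f x + (if x = a then 1 else 0) - (if x = v then 1 else 0)
  | _, _, .nil _, f, hf, _, _ => ⟨f, hf, fun x => by ring⟩
  | _, _, .cons (u := u) (v := v') e he p, f, hf, hsat, hnd => by
      have hnd' : e ∉ p.edges ∧ p.edges.Nodup := by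
        simpa [Walk.edges, List.nodup_cons] using hnd
      have key : ∃ f₁, Vld G f₁ ∧ (∀ e', e' ≠ e → f₁ e' = f e') ∧
          ∀ x, dd f₁ x = dd f x + (if x = u then 1 else 0) - (if x = v' then 1 else 0) := by
        rcases hsat.1 with h0 | h0
        · refine ⟨Function.update f e (some (u, v')), ?_, ?_, ?_⟩
          · intro e' a' b' h'
            by_cases hee : e' = e
            · subst hee; rw [Function.update_self] at h'
              obtain ⟨rfl, rfl⟩ : u = a' ∧ v' = b' := by
                simpa [Prod.ext_iff] using h'
              exact he
            · rw [Function.update_of_ne hee] at h'; exact hf e' a' b' h'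
          · intro e' h'; rw [Function.update_of_ne h']
          · intro x; rw [dd_update, h0, tm_none, tm_some]; ring
        · refine ⟨Function.update f e none, ?_, ?_, ?_⟩
          · intro e' a' b' h'
            by_cases hee : e' = e
            · subst hee; rw [Function.update_self] at h'; exact absurd h' (by simp)
            · rw [Function.update_of_ne hee] at h'; exact hf e' a' b' h'
          · intro e' h'; rw [Function.update_of_ne h']
          · intro x; rw [dd_update, h0, tm_none, tm_some]; ring
      obtain ⟨f₁, hv₁, hagree, hdd₁⟩ := key
      have hsat₁ : Sat (Qres f₁) p := by
        refine Sat_mono p (fun a b e' hmem hq => ?_) hsat.2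
        have hne : e' ≠ e := fun h => hnd'.1 (h ▸ hmem)
        rw [Qres, hagree e' hne]; exact hq
      obtain ⟨f', hv', hdd'⟩ := augment p f₁ hv₁ hsat₁ hnd'.2
      exact ⟨f', hv', fun x => by rw [hdd' x, hdd₁ x]; ring⟩

lemma exists_out [Fintype E] (f : E → Option (V × V)) {a : V} (ha : 0 < dd f a) :
    ∃ e b, f e = some (a, b) := by
  by_contra h; push_neg at h
  have hle : ∀ e : E, tm a (f e) ≤ 0 := by
    intro e
    rcases he : f e with _ | ⟨c, d⟩
    · simp [tm]
    · have hca : a ≠ c := fun hc => h e d (by rw [he, hc])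
      rw [tm_some, if_neg hca]
      split_ifs <;> omega
  have : dd f a ≤ 0 := Finset.sum_nonpos (fun e _ => hle e)
  omega

lemma extract [Fintype E] :
    ∀ (n : ℕ) (f : E → Option (V × V)), Vld G f →
    (Finset.univ.filter (fun e => (f e).isSome)).card ≤ n →
    ∀ a, 0 < dd f a →
    ∃ (b : V) (p : G.Walk a b), Sat (Qdir f) p ∧ p.edges.Nodup ∧ dd f b < 0 := by
  intro n
  induction n with
  | zero =>
      intro f hf hcard a ha
      have hempty : Finset.univ.filter (fun e => (f e).isSome) = ∅ :=
        Finset.card_eq_zero.mp (le_antisymm hcard (Nat.zero_le _))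
      have hnone : ∀ e, f e = none := by
        intro e
        by_contra h
        have : e ∈ Finset.univ.filter (fun e => (f e).isSome) := by
          simp [Option.isSome_iff_ne_none, h]
        rw [hempty] at this; simp at this
      have : dd f a = 0 := by
        unfold dd
        exact Finset.sum_eq_zero (fun e _ => by rw [hnone e, tm_none])
      omega
  | succ n ih =>
      intro f hf hcard a ha
      obtain ⟨e, b, heb⟩ := exists_out f ha
      set f₁ := Function.update f e none with hf₁def
      have hv₁ : Vld G f₁ := by
        intro e' a' b' h'
        by_cases hee : e' = e
        · subst hee; rw [hf₁def, Function.update_self] at h'; exact absurd h' (by simp)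
        · rw [hf₁def, Function.update_of_ne hee] at h'; exact hf e' a' b' h'
      have hdd₁ : ∀ x, dd f₁ x = dd f x - (if x = a then 1 else 0) + (if x = b then 1 else 0) :=
        fun x => by rw [hf₁def, dd_update, heb, tm_some, tm_none]; ring
      have hagree : ∀ e', e' ≠ e → f₁ e' = f e' := fun e' h' => Function.update_of_ne h' _ _
      have hcard₁ : (Finset.univ.filter (fun e' => (f₁ e').isSome)).card ≤ n := by
        have hsub : Finset.univ.filter (fun e' => (f₁ e').isSome) ⊆
            (Finset.univ.filter (fun e' => (f e').isSome)).erase e := by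
          intro e' h'
          simp only [Finset.mem_filter, Finset.mem_univ, true_and] at h'
          have hne : e' ≠ e := by
            intro h; subst h
            rw [hf₁def, Function.update_self] at h'; simp at h'
          rw [hagree e' hne] at h'
          exact Finset.mem_erase.mpr ⟨hne, by simp [h']⟩
        have hmem : e ∈ Finset.univ.filter (fun e' => (f e').isSome) := by simp [heb]
        have := Finset.card_le_card hsub
        rw [Finset.card_erase_of_mem hmem] at this
        omega
      by_cases hb : dd f b < 0
      · exact ⟨b, .cons e (hf e a b heb) (.nil b), ⟨heb, trivial⟩, by simp [Walk.edges], hb⟩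
      · push_neg at hb
        by_cases hab : b = a
        · subst hab
          have hdd₁' : ∀ x, dd f₁ x = dd f x := fun x => by rw [hdd₁]; ring
          obtain ⟨c, q, hq1, hq2, hq3⟩ := ih f₁ hv₁ hcard₁ b (by rw [hdd₁' b]; exact ha)
          have hq1' : Sat (Qdir f) q := by
            refine Sat_mono q (fun a' b' e' hmem hq => ?_) hq1
            have hne : e' ≠ e := by
              intro h
              have hq' : f₁ e = some (a', b') := h ▸ hq
              rw [hf₁def, Function.update_self] at hq'
              exact absurd hq' (by simp)
            rw [Qdir, ← hagree e' hne]; exact hq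
          exact ⟨c, q, hq1', hq2, by rw [← hdd₁' c]; exact hq3⟩
        · have hdb₁ : 0 < dd f₁ b := by
            have := hdd₁ b
            rw [if_neg hab, if_pos rfl] at this
            omega
          obtain ⟨c, q, hq1, hq2, hq3⟩ := ih f₁ hv₁ hcard₁ b hdb₁
          have hca : c ≠ a := by
            intro h; subst h
            have h2 := hdd₁ c
            rw [if_pos rfl] at h2
            have : (if c = b then (1:ℤ) else 0) = 0 := by
              rw [if_neg (fun h => hab h.symm)]
            rw [this] at h2
            omega
          have hfc : dd f c < 0 := by
            have h2 := hdd₁ c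
            rw [if_neg hca] at h2
            by_cases hcb : c = b
            · rw [if_pos hcb] at h2; omega
            · rw [if_neg hcb] at h2; omega
          have heq : e ∉ q.edges := by
            intro hmem
            obtain ⟨a', b', hq'⟩ := Sat_edge q hq1 e hmem
            rw [Qdir, hf₁def, Function.update_self] at hq'
            exact absurd hq' (by simp)
          have hq1' : Sat (Qdir f) q := by
            refine Sat_mono q (fun a' b' e' hmem hq => ?_) hq1
            have hne : e' ≠ e := fun h => heq (h ▸ hmem)
            rw [Qdir, ← hagree e' hne]; exact hq
          refine ⟨c, .cons e (hf e a b heb) q, ⟨heb, hq1'⟩, ?_, hfc⟩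
          simp [Walk.edges, List.nodup_cons]
          exact ⟨heq, hq2⟩

lemma peel [Fintype E] :
    ∀ {a b : V} (p : G.Walk a b) (f : E → Option (V × V)), Vld G f → Sat (Qdir f) p →
    p.edges.Nodup →
    ∃ f', Vld G f' ∧ (∀ e ∈ p.edges, f' e = none) ∧ (∀ e, e ∉ p.edges → f' e = f e) ∧
      ∀ x, dd f' x = dd f x - (if x = a then 1 else 0) + (if x = b then 1 else 0)
  | _, _, .nil _, f, hf, _, _ => ⟨f, hf, by simp [Walk.edges], fun _ _ => rfl, fun x => by ring⟩
  | _, _, .cons (u := u) (v := v') e he p, f, hf, hsat, hnd => by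
      have hnd' : e ∉ p.edges ∧ p.edges.Nodup := by
        simpa [Walk.edges, List.nodup_cons] using hnd
      have hfe : f e = some (u, v') := hsat.1
      set f₁ := Function.update f e none with hf₁def
      have hv₁ : Vld G f₁ := by
        intro e' a' b' h'
        by_cases hee : e' = e
        · subst hee; rw [hf₁def, Function.update_self] at h'; exact absurd h' (by simp)
        · rw [hf₁def, Function.update_of_ne hee] at h'; exact hf e' a' b' h'
      have hagree : ∀ e', e' ≠ e → f₁ e' = f e' := fun e' h' => Function.update_of_ne h' _ _
      have hdd₁ : ∀ x, dd f₁ x = dd f x - (if x = u then 1 else 0) + (if x = v' then 1 else 0) :=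
        fun x => by rw [hf₁def, dd_update, hfe, tm_some, tm_none]; ring
      have hsat₁ : Sat (Qdir f₁) p := by
        refine Sat_mono p (fun a' b' e' hmem hq => ?_) hsat.2
        have hne : e' ≠ e := fun h => hnd'.1 (h ▸ hmem)
        rw [Qdir, hagree e' hne]; exact hq
      obtain ⟨f', F1, F2, F3, F4⟩ := peel p f₁ hv₁ hsat₁ hnd'.2
      refine ⟨f', F1, ?_, ?_, fun x => by rw [F4 x, hdd₁ x]; ring⟩
      · intro e' h'
        simp only [Walk.edges, List.mem_cons] at h'
        rcases h' with rfl | h'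
        · rw [F3 e' hnd'.1, hf₁def, Function.update_self]
        · exact F2 e' h'
      · intro e' h'
        simp only [Walk.edges, List.mem_cons] at h'
        push_neg at h'
        rw [F3 e' h'.2, hagree e' h'.1]

def Fv [Fintype E] (G : Multigraph V E) (f : E → Option (V × V)) (u v : V) (k : ℕ) : Prop :=
  Vld G f ∧ ∀ x, dd f x = (if x = u then (k : ℤ) else 0) - (if x = v then (k : ℤ) else 0)

lemma step_down [Fintype E] {u v : V} {f : E → Option (V × V)} {k : ℕ} (hne : u ≠ v)
    (hf : Fv G f u v (k + 1)) :
    ∃ (p : G.Walk u v) (f' : E → Option (V × V)), Sat (Qdir f) p ∧ p.edges.Nodup ∧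
      Fv G f' u v k ∧ (∀ e ∈ p.edges, f' e = none) ∧ (∀ e, e ∉ p.edges → f' e = f e) := by
  have hu : 0 < dd f u := by
    rw [hf.2 u, if_pos rfl, if_neg hne]
    push_cast; omega
  obtain ⟨b, p, hp1, hp2, hp3⟩ := extract _ f hf.1 le_rfl u hu
  have hbv : b = v := by
    by_contra hbv
    rw [hf.2 b, if_neg hbv] at hp3
    by_cases hbu : b = u
    · rw [if_pos hbu] at hp3; omega
    · rw [if_neg hbu] at hp3; omega
  subst hbv
  obtain ⟨f', F1, F2, F3, F4⟩ := peel p f hf.1 hp1 hp2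
  refine ⟨p, f', hp1, hp2, ⟨F1, fun x => ?_⟩, F2, F3⟩
  rw [F4 x, hf.2 x]
  by_cases hxu : x = u
  · have hxb : x ≠ b := fun h => hne (hxu.symm.trans h)
    rw [if_pos hxu, if_pos hxu, if_pos hxu, if_neg hxb, if_neg hxb, if_neg hxb]
    push_cast; ring
  · rw [if_neg hxu, if_neg hxu, if_neg hxu]
    by_cases hxb : x = b
    · rw [if_pos hxb, if_pos hxb, if_pos hxb]; push_cast; ring
    · rw [if_neg hxb, if_neg hxb, if_neg hxb]; ring

end Aux
end Flow
section Menger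
namespace Aux
open Multigraph
open scoped Classical

variable {V E : Type} {G : Multigraph V E}

theorem mengerCore [Finite V] [Fintype E] {u v : V} (hne : u ≠ v)
    (H : ∀ F : Set E, F.ncard ≤ 2 → ∃ p : G.Walk u v, ∀ e ∈ p.edges, e ∉ F) :
    ThreePaths G u v := by
  have build : ∀ k : ℕ, k ≤ 3 → ∃ f, Fv G f u v k := by
    intro k
    induction k with
    | zero =>
        intro _
        refine ⟨fun _ => none, fun e a b h => by simp at h, fun x => by
          simp [dd, tm]⟩
    | succ k ih =>
        intro hk
        obtain ⟨f, hf⟩ := ih (by omega)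
        set X : Set V := {x | ∃ p : G.Walk u x, Sat (Qres f) p} with hXdef
        have huX : u ∈ X := ⟨.nil u, trivial⟩
        have hstep : ∀ e x y, G.inc e = s(x, y) → x ∈ X → f e = some (x, y) ∨ y ∈ X := by
          intro e x y hxy hx
          obtain ⟨p, hp⟩ := hx
          rcases hfe : f e with _ | ⟨c, d⟩
          · exact Or.inr ⟨wapp p (.cons e hxy (.nil y)), Sat_wapp _ _ hp ⟨Or.inl hfe, trivial⟩⟩
          · have hcd : s(x, y) = s(c, d) := by rw [← hxy, hf.1 e c d hfe]
            rcases Sym2.eq_iff.mp hcd with ⟨h1, h2⟩ | ⟨h1, h2⟩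
            · exact Or.inl (by rw [h1, h2])
            · refine Or.inr ⟨wapp p (.cons e hxy (.nil y)),
                Sat_wapp _ _ hp ⟨Or.inr (by rw [hfe, h1, h2]), trivial⟩⟩
        have hvX : v ∈ X := by
          by_contra hv
          have horient : ∀ e ∈ G.delta X,
              ∃ x y, G.inc e = s(x, y) ∧ x ∈ X ∧ y ∉ X ∧ f e = some (x, y) := by
            intro e he
            obtain ⟨x, y, hxy, hx, hy⟩ := he
            rcases hstep e x y hxy hx with h | h
            · exact ⟨x, y, hxy, hx, hy, h⟩
            · exact absurd h hy
          have hXfin : X.Finite := Set.toFinite X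
          set Xf := hXfin.toFinset with hXf
          have hmemXf : ∀ x, x ∈ Xf ↔ x ∈ X := fun x => Set.Finite.mem_toFinset _
          have h1 : ∑ x ∈ Xf, dd f x = (k : ℤ) := by
            rw [Finset.sum_congr rfl (fun x _ => hf.2 x), Finset.sum_sub_distrib,
              Finset.sum_ite_eq' Xf u (fun _ => (k : ℤ)),
              Finset.sum_ite_eq' Xf v (fun _ => (k : ℤ)),
              if_pos ((hmemXf u).mpr huX), if_neg (fun h => hv ((hmemXf v).mp h))]
            ring
          have h2 : ∑ x ∈ Xf, dd f x = ∑ e : E, (if e ∈ G.delta X then (1 : ℤ) else 0) := by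
            unfold dd
            rw [Finset.sum_comm]
            refine Finset.sum_congr rfl (fun e _ => ?_)
            rcases hfe : f e with _ | ⟨c, d⟩
            · have hnd : e ∉ G.delta X := by
                intro he
                obtain ⟨x, y, _, _, _, hsome⟩ := horient e he
                rw [hfe] at hsome; simp at hsome
              rw [if_neg hnd]
              exact Finset.sum_eq_zero (fun x _ => tm_none x)
            · have hsum : ∑ x ∈ Xf, tm x (some (c, d))
                  = (if c ∈ Xf then (1 : ℤ) else 0) - (if d ∈ Xf then 1 else 0) := by
                rw [Finset.sum_congr rfl (fun x _ => tm_some x c d),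
                  Finset.sum_sub_distrib,
                  Finset.sum_ite_eq' Xf c (fun _ => (1 : ℤ)),
                  Finset.sum_ite_eq' Xf d (fun _ => (1 : ℤ))]
              rw [hsum]
              by_cases hc : c ∈ X <;> by_cases hd : d ∈ X
              · have hnd : e ∉ G.delta X := by
                  intro he
                  obtain ⟨x, y, hxy, hx, hy, hsome⟩ := horient e he
                  rw [hfe] at hsome
                  obtain ⟨h1', h2'⟩ : c = x ∧ d = y := by
                    simpa [Prod.ext_iff] using hsome
                  exact hy (h2' ▸ hd)
                rw [if_neg hnd, if_pos ((hmemXf c).mpr hc), if_pos ((hmemXf d).mpr hd)]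
                ring
              · have hmem : e ∈ G.delta X := ⟨c, d, hf.1 e c d hfe, hc, hd⟩
                rw [if_pos hmem, if_pos ((hmemXf c).mpr hc),
                  if_neg (fun h => hd ((hmemXf d).mp h))]
                ring
              · exfalso
                have hmem : e ∈ G.delta X :=
                  ⟨d, c, (hf.1 e c d hfe).trans Sym2.eq_swap, hd, hc⟩
                obtain ⟨x, y, hxy, hx, hy, hsome⟩ := horient e hmem
                rw [hfe] at hsome
                obtain ⟨h1', h2'⟩ : c = x ∧ d = y := by
                  simpa [Prod.ext_iff] using hsome
                exact hc (h1' ▸ hx)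
              · have hnd : e ∉ G.delta X := by
                  intro he
                  obtain ⟨x, y, hxy, hx, hy, hsome⟩ := horient e he
                  rw [hfe] at hsome
                  obtain ⟨h1', h2'⟩ : c = x ∧ d = y := by
                    simpa [Prod.ext_iff] using hsome
                  exact hc (h1' ▸ hx)
                rw [if_neg hnd, if_neg (fun h => hc ((hmemXf c).mp h)),
                  if_neg (fun h => hd ((hmemXf d).mp h))]
                ring
          have h3 : ∑ e : E, (if e ∈ G.delta X then (1 : ℤ) else 0)
              = ((Finset.univ.filter (fun e => e ∈ G.delta X)).card : ℤ) := by
            rw [Finset.sum_boole]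
          have hcardeq : (Finset.univ.filter (fun e => e ∈ G.delta X)).card
              = (G.delta X).ncard := by
            rw [Set.ncard_eq_toFinset_card']
            congr 1
            ext e
            simp [Set.mem_toFinset]
          have hklek : ((G.delta X).ncard : ℤ) = (k : ℤ) := by
            rw [← hcardeq, ← h3, ← h2, h1]
          have hle : (G.delta X).ncard ≤ 2 := by
            have : (G.delta X).ncard = k := by exact_mod_cast hklek
            omega
          obtain ⟨p, hp⟩ := H (G.delta X) hle
          obtain ⟨x, y, e, hx, hy, hxy, hmem, -, -⟩ := walk_exit p X huX hv
          exact hp e hmem ⟨x, y, hxy, hx, hy⟩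
        obtain ⟨p0, hp0⟩ := hvX
        obtain ⟨p, hndp, hsat, -⟩ := exists_path_sub (Qres f) p0 hp0
        obtain ⟨f', hv', hdd'⟩ := augment p f hf.1 hsat (edges_nodup_of_support_nodup p hndp)
        refine ⟨f', hv', fun x => ?_⟩
        rw [hdd' x, hf.2 x]
        by_cases hxu : x = u
        · have hxv : x ≠ v := fun h => hne (hxu.symm.trans h)
          rw [if_pos hxu, if_pos hxu, if_pos hxu, if_neg hxv, if_neg hxv, if_neg hxv]
          push_cast; ring
        · rw [if_neg hxu, if_neg hxu, if_neg hxu]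
          by_cases hxv : x = v
          · rw [if_pos hxv, if_pos hxv, if_pos hxv]; push_cast; ring
          · rw [if_neg hxv, if_neg hxv, if_neg hxv]; ring
  obtain ⟨f3, hf3⟩ := build 3 le_rfl
  obtain ⟨p3, f2, s3, n3, hf2, z3, ag3⟩ := step_down (k := 2) hne hf3
  obtain ⟨p2, f1, s2, n2, hf1, z2, ag2⟩ := step_down (k := 1) hne hf2
  obtain ⟨p1, f0, s1, n1, hf0, z1, ag1⟩ := step_down (k := 0) hne hf1
  have asg : ∀ {a b : V} (q : G.Walk a b) (f : E → Option (V × V)),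
      Sat (Qdir f) q → ∀ e ∈ q.edges, f e ≠ none := by
    intro a b q f hq e hmem hnone
    obtain ⟨a', b', h⟩ := Sat_edge q hq e hmem
    have h' : f e = some (a', b') := h
    rw [hnone] at h'
    simp at h'
  have h32 : ∀ e ∈ p2.edges, e ∉ p3.edges := fun e he2 he3 =>
    asg p2 f2 s2 e he2 (z3 e he3)
  have h21 : ∀ e ∈ p1.edges, e ∉ p2.edges := fun e he1 he2 =>
    asg p1 f1 s1 e he1 (z2 e he2)
  have h31 : ∀ e ∈ p1.edges, e ∉ p3.edges := by
    intro e he1 he3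
    have hf1e : f1 e ≠ none := asg p1 f1 s1 e he1
    by_cases he2 : e ∈ p2.edges
    · exact hf1e (z2 e he2)
    · exact hf1e ((ag2 e he2).trans (z3 e he3))
  obtain ⟨q1, hq1n, -, hq1e⟩ := exists_path_sub (Qdir f1) p1 s1
  obtain ⟨q2, hq2n, -, hq2e⟩ := exists_path_sub (Qdir f2) p2 s2
  obtain ⟨q3, hq3n, -, hq3e⟩ := exists_path_sub (Qdir f3) p3 s3
  refine ⟨q1, q2, q3, hq1n, hq2n, hq3n, ?_, ?_, ?_⟩
  · exact fun e he1 he2 => h21 e (hq1e e he1) (hq2e e he2)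
  · exact fun e he1 he3 => h31 e (hq1e e he1) (hq3e e he3)
  · exact fun e he2 he3 => h32 e (hq2e e he2) (hq3e e he3)

end Aux
end Menger
section Fences
namespace Aux
open Multigraph

variable {V E : Type} {G : Multigraph V E}

def Reach (G : Multigraph V E) (S : Set V) (x y : V) : Prop :=
  ∃ p : G.Walk x y, ∀ s ∈ p.support, s ∈ S

lemma reach_refl {S : Set V} {x : V} (hx : x ∈ S) : Reach G S x x :=
  ⟨.nil x, by simp [Walk.support]; exact hx⟩

lemma reach_mem_left {S : Set V} {x y : V} (h : Reach G S x y) : x ∈ S :=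
  h.choose_spec x (start_mem_support _)

lemma reach_mem_right {S : Set V} {x y : V} (h : Reach G S x y) : y ∈ S :=
  h.choose_spec y (end_mem_support _)

lemma reach_mono {S T : Set V} (hST : S ⊆ T) {x y : V} (h : Reach G S x y) :
    Reach G T x y := ⟨h.choose, fun s hs => hST (h.choose_spec s hs)⟩

lemma reach_trans {S : Set V} {x y z : V} (h1 : Reach G S x y) (h2 : Reach G S y z) :
    Reach G S x z := by
  obtain ⟨p, hp⟩ := h1; obtain ⟨q, hq⟩ := h2
  refine ⟨wapp p q, fun s hs => ?_⟩
  rcases (mem_wapp_support p q s).mp hs with h | h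
  · exact hp s h
  · exact hq s h

lemma reach_symm {S : Set V} {x y : V} (h : Reach G S x y) : Reach G S y x := by
  obtain ⟨p, hp⟩ := h
  exact ⟨wrev p, fun s hs => hp s ((mem_wrev_support p s).mp hs)⟩

lemma reach_snoc {S : Set V} {x y z : V} (h : Reach G S x y) {e : E}
    (he : G.inc e = s(y, z)) (hz : z ∈ S) : Reach G S x z := by
  obtain ⟨p, hp⟩ := h
  refine ⟨wapp p (.cons e he (.nil z)), fun s hs => ?_⟩
  rcases (mem_wapp_support _ _ s).mp hs with h | h
  · exact hp s h
  · simp [Walk.support] at h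
    rcases h with rfl | rfl
    · exact hp _ (end_mem_support p)
    · exact hz

/-- any two vertices of a reach-component are joined within the component. -/
lemma reach_in_component {S : Set V} {t x y : V} (hx : Reach G S t x)
    (hy : Reach G S t y) : Reach G {z | Reach G S t z} x y := by
  obtain ⟨p, hp⟩ := hx; obtain ⟨q, hq⟩ := hy
  refine ⟨wapp (wrev p) q, fun s hs => ?_⟩
  rcases (mem_wapp_support _ _ s).mp hs with h | h
  · rw [mem_wrev_support] at h
    obtain ⟨r, _, hr2⟩ := exists_prefix p s h
    exact ⟨r, fun a ha => hp a (hr2 a ha)⟩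
  · obtain ⟨r, _, hr2⟩ := exists_prefix q s h
    exact ⟨r, fun a ha => hq a (hr2 a ha)⟩

def Conn (G : Multigraph V E) (S : Set V) : Prop :=
  S.Nonempty ∧ ∀ x ∈ S, ∀ y ∈ S, Reach G S x y

lemma conn_component {S : Set V} {t : V} (ht : t ∈ S) :
    Conn G {z | Reach G S t z} := by
  refine ⟨⟨t, reach_refl ht⟩, fun x hx y hy => reach_in_component hx hy⟩

lemma conn_union_mem {X Y : Set V} (hX : Conn G X) (hY : Conn G Y) {s : V}
    (hsX : s ∈ X) (hsY : s ∈ Y) : Conn G (X ∪ Y) := by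
  have key : ∀ c ∈ X ∪ Y, Reach G (X ∪ Y) s c := by
    intro c hc
    rcases hc with hc | hc
    · exact reach_mono Set.subset_union_left (hX.2 s hsX c hc)
    · exact reach_mono Set.subset_union_right (hY.2 s hsY c hc)
  exact ⟨⟨s, Or.inl hsX⟩, fun a ha b hb => reach_trans (reach_symm (key a ha)) (key b hb)⟩

lemma conn_union_edge {X Y : Set V} (hX : Conn G X) (hY : Conn G Y) {e : E} {x y : V}
    (he : G.inc e = s(x, y)) (hx : x ∈ X) (hy : y ∈ Y) : Conn G (X ∪ Y) := by
  have key : ∀ c ∈ X ∪ Y, Reach G (X ∪ Y) x c := by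
    intro c hc
    rcases hc with hc | hc
    · exact reach_mono Set.subset_union_left (hX.2 x hx c hc)
    · have h1 : Reach G (X ∪ Y) x y := reach_snoc (reach_refl (Or.inl hx)) he (Or.inr hy)
      exact reach_trans h1 (reach_mono Set.subset_union_right (hY.2 y hy c hc))
  exact ⟨⟨x, Or.inl hx⟩, fun a ha b hb => reach_trans (reach_symm (key a ha)) (key b hb)⟩

lemma sym2_rep (z : Sym2 V) : ∃ a b : V, z = s(a, b) :=
  Sym2.ind (fun a b => ⟨a, b, rfl⟩) z

lemma mem_delta_iff (e : E) {a b : V} (hab : G.inc e = s(a, b)) (S : Set V) :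
    e ∈ G.delta S ↔ ((a ∈ S ∧ b ∉ S) ∨ (b ∈ S ∧ a ∉ S)) := by
  constructor
  · rintro ⟨x, y, hxy, hx, hy⟩
    rcases Sym2.eq_iff.mp (hab.symm.trans hxy) with ⟨h1, h2⟩ | ⟨h1, h2⟩
    · exact Or.inl ⟨h1 ▸ hx, h2 ▸ hy⟩
    · exact Or.inr ⟨h2 ▸ hx, h1 ▸ hy⟩
  · rintro (⟨h1, h2⟩ | ⟨h1, h2⟩)
    · exact ⟨a, b, hab, h1, h2⟩
    · exact ⟨b, a, hab.trans Sym2.eq_swap, h1, h2⟩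

lemma delta_union_sub (X Y : Set V) : G.delta (X ∪ Y) ⊆ G.delta X ∪ G.delta Y := by
  intro e he
  obtain ⟨a, b, hab⟩ := sym2_rep (G.inc e)
  simp only [Set.mem_union, mem_delta_iff e hab, Set.mem_union] at he ⊢
  tauto

lemma delta_submod [Finite E] (X Y : Set V) :
    (G.delta (X ∩ Y)).ncard + (G.delta (X ∪ Y)).ncard
      ≤ (G.delta X).ncard + (G.delta Y).ncard := by
  have l1 : G.delta (X ∩ Y) ∪ G.delta (X ∪ Y) ⊆ G.delta X ∪ G.delta Y := by
    intro e he
    obtain ⟨a, b, hab⟩ := sym2_rep (G.inc e)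
    simp only [Set.mem_union, mem_delta_iff e hab, Set.mem_inter_iff, Set.mem_union] at he ⊢
    tauto
  have l2 : G.delta (X ∩ Y) ∩ G.delta (X ∪ Y) ⊆ G.delta X ∩ G.delta Y := by
    intro e he
    obtain ⟨a, b, hab⟩ := sym2_rep (G.inc e)
    simp only [Set.mem_inter_iff, mem_delta_iff e hab, Set.mem_union] at he ⊢
    tauto
  have e1 := Set.ncard_union_add_ncard_inter (G.delta (X ∩ Y)) (G.delta (X ∪ Y))
    (Set.toFinite _) (Set.toFinite _)
  have e2 := Set.ncard_union_add_ncard_inter (G.delta X) (G.delta Y)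
    (Set.toFinite _) (Set.toFinite _)
  have m1 := Set.ncard_le_ncard l1 (Set.toFinite _)
  have m2 := Set.ncard_le_ncard l2 (Set.toFinite _)
  omega

lemma delta_posimod [Finite E] (X Y : Set V) :
    (G.delta (X \ Y)).ncard + (G.delta (Y \ X)).ncard
      ≤ (G.delta X).ncard + (G.delta Y).ncard := by
  have l1 : G.delta (X \ Y) ∪ G.delta (Y \ X) ⊆ G.delta X ∪ G.delta Y := by
    intro e he
    obtain ⟨a, b, hab⟩ := sym2_rep (G.inc e)
    simp only [Set.mem_union, mem_delta_iff e hab, Set.mem_diff] at he ⊢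
    tauto
  have l2 : G.delta (X \ Y) ∩ G.delta (Y \ X) ⊆ G.delta X ∩ G.delta Y := by
    intro e he
    obtain ⟨a, b, hab⟩ := sym2_rep (G.inc e)
    simp only [Set.mem_inter_iff, mem_delta_iff e hab, Set.mem_diff] at he ⊢
    tauto
  have e1 := Set.ncard_union_add_ncard_inter (G.delta (X \ Y)) (G.delta (Y \ X))
    (Set.toFinite _) (Set.toFinite _)
  have e2 := Set.ncard_union_add_ncard_inter (G.delta X) (G.delta Y)
    (Set.toFinite _) (Set.toFinite _)
  have m1 := Set.ncard_le_ncard l1 (Set.toFinite _)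
  have m2 := Set.ncard_le_ncard l2 (Set.toFinite _)
  omega

/-- A fence around `w` inside `Z`. -/
def Fence (G : Multigraph V E) (Z : Set V) (w : V) (X : Set V) : Prop :=
  w ∈ X ∧ X ⊆ Z ∧ Conn G X ∧ (G.delta X).ncard ≤ 2

set_option maxHeartbeats 2000000 in
theorem lemA [Finite V] [Finite E] :
    ∀ (n : ℕ) (Z : Set V), Z.ncard ≤ n → Conn G Z →
      (∀ w ∈ Z, ∃ X, Fence G Z w X) → (G.delta Z).ncard ≤ 2 := by
  intro n
  induction n with
  | zero =>
      intro Z hZn hZc _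
      exfalso
      have : Z = ∅ := (Set.ncard_eq_zero (Set.toFinite Z)).mp (Nat.le_zero.mp hZn)
      obtain ⟨x, hx⟩ := hZc.1
      rw [this] at hx
      exact hx
  | succ n ih =>
      intro Z hZn hZc hfen
      set F : Set (Set V) := {X | X ⊆ Z ∧ Conn G X ∧ (G.delta X).ncard ≤ 2} with hF
      have hFne : F.Nonempty := by
        obtain ⟨w₀, hw₀⟩ := hZc.1
        obtain ⟨X₀, hX₀⟩ := hfen w₀ hw₀
        exact ⟨X₀, hX₀.2.1, hX₀.2.2.1, hX₀.2.2.2⟩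
      have hFfin : F.Finite :=
        ((Set.toFinite Z).finite_subsets).subset (fun X hX => hX.1)
      obtain ⟨X, hXF, hmax'⟩ := Set.Finite.exists_maximalFor Set.ncard F hFfin hFne
      have hmax : ∀ X' ∈ F, X ⊆ X' → X' = X := by
        intro X' h1 h2
        by_contra hne'
        have hss : X ⊂ X' := ⟨h2, fun h => hne' (Set.Subset.antisymm h h2)⟩
        have hlt := Set.ncard_lt_ncard hss (Set.toFinite X')
        have := hmax' h1 (le_of_lt hlt)
        omega
      by_cases hZX : Z ⊆ X
      · have hXZ : X = Z := Set.Subset.antisymm hXF.1 hZX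
        rw [← hXZ]
        exact hXF.2.2
      · exfalso
        obtain ⟨t, htZ, htX⟩ := Set.not_subset.mp hZX
        set C : Set V := {y | Reach G (Z \ X) t y} with hCdef
        have htZX : t ∈ Z \ X := ⟨htZ, htX⟩
        have htC : t ∈ C := reach_refl htZX
        have hCsub : C ⊆ Z \ X := fun y hy => reach_mem_right hy
        have hCconn : Conn G C := conn_component htZX
        have hCclosed : ∀ e x y, G.inc e = s(x, y) → x ∈ C → y ∈ Z \ X → y ∈ C :=
          fun e x y he hx hy => reach_snoc hx he hy
        -- a crossing edge from C to X
        obtain ⟨x₀, hx₀⟩ := hXF.2.1.1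
        obtain ⟨p, hp⟩ := hZc.2 t htZ x₀ (hXF.1 hx₀)
        have hx₀C : x₀ ∉ C := fun h => (hCsub h).2 hx₀
        obtain ⟨xg, yg, g, hxgC, hygC, hg, -, -, hygsup⟩ := walk_exit p C htC hx₀C
        have hygZ : yg ∈ Z := hp yg hygsup
        have hygX : yg ∈ X := by
          by_contra hyX
          exact hygC (hCclosed g xg yg hg hxgC ⟨hygZ, hyX⟩)
        have hxgX : xg ∉ X := (hCsub hxgC).2
        -- (ii) : the component C has a large cut
        have hCge : ¬ (G.delta C).ncard ≤ 2 := by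
          intro hC2
          have hgX : g ∈ G.delta X := (mem_delta_iff g hg X).mpr (Or.inr ⟨hygX, hxgX⟩)
          have hgC : g ∈ G.delta C := (mem_delta_iff g hg C).mpr (Or.inl ⟨hxgC, hygC⟩)
          have hsub : G.delta (X ∪ C) ⊆ (G.delta X ∪ G.delta C) \ {g} := by
            intro e he
            refine ⟨delta_union_sub X C he, ?_⟩
            intro hge
            rw [Set.mem_singleton_iff] at hge
            subst hge
            rcases (mem_delta_iff e hg (X ∪ C)).mp he with ⟨-, h2⟩ | ⟨-, h2⟩
            · exact h2 (Or.inl hygX)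
            · exact h2 (Or.inr hxgC)
          have hXC : X ∪ C ∈ F := by
            refine ⟨Set.union_subset hXF.1 (hCsub.trans Set.diff_subset), ?_, ?_⟩
            · exact conn_union_edge hXF.2.1 hCconn (hg.trans Sym2.eq_swap) hygX hxgC
            · have c1 := Set.ncard_le_ncard hsub (Set.toFinite _)
              have hgU : g ∈ G.delta X ∪ G.delta C := Or.inl hgX
              have c2 := Set.ncard_diff_singleton_of_mem hgU
              have c3 := Set.ncard_union_add_ncard_inter (G.delta X) (G.delta C)
                (Set.toFinite _) (Set.toFinite _)
              have c4 : 1 ≤ (G.delta X ∩ G.delta C).ncard := by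
                rw [Nat.one_le_iff_ne_zero]
                intro h0
                have : G.delta X ∩ G.delta C = ∅ :=
                  (Set.ncard_eq_zero (Set.toFinite _)).mp h0
                have : g ∈ (∅ : Set E) := this ▸ ⟨hgX, hgC⟩
                exact this
              have c5 := hXF.2.2
              omega
          have heq : X ∪ C = X := hmax _ hXC Set.subset_union_left
          have : xg ∈ X := heq ▸ (Or.inr hxgC : xg ∈ X ∪ C)
          exact hxgX this
        -- (iii) : every vertex of C is fenced within C
        have hfenC : ∀ w ∈ C, ∃ X', Fence G C w X' := by
          intro w hwC
          obtain ⟨X', hX'⟩ := hfen w (hCsub hwC).1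
          obtain ⟨hwX', hX'Z, hX'conn, hX'2⟩ := hX'
          have hwZX : w ∈ Z \ X := hCsub hwC
          by_cases hint : (X' ∩ X).Nonempty
          · by_cases hXX' : X ⊆ X'
            · exfalso
              have : X' = X := hmax X' ⟨hX'Z, hX'conn, hX'2⟩ hXX'
              exact hwZX.2 (this ▸ hwX')
            · obtain ⟨s₀, hs₀X, hs₀X'⟩ := Set.not_subset.mp hXX'
              by_cases hsplit : (G.delta (X' \ X)).ncard ≤ 2
              · -- the component of w in X' \ X is a fence inside C
                set W : Set V := {y | Reach G (X' \ X) w y} with hW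
                have hwXX : w ∈ X' \ X := ⟨hwX', hwZX.2⟩
                refine ⟨W, reach_refl hwXX, ?_, conn_component hwXX, ?_⟩
                · intro y hy
                  have h1 : Reach G (Z \ X) w y :=
                    reach_mono (show X' \ X ⊆ Z \ X from fun a ha => ⟨hX'Z ha.1, ha.2⟩) hy
                  exact reach_trans hwC h1
                · have hWsub : G.delta W ⊆ G.delta (X' \ X) := by
                    intro e he
                    obtain ⟨a, b, hab, ha, hb⟩ := he
                    have haXX : a ∈ X' \ X := reach_mem_right ha
                    have hbXX : b ∉ X' \ X := fun hbm => hb (reach_snoc ha hab hbm)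
                    exact ⟨a, b, hab, haXX, hbXX⟩
                  exact le_trans (Set.ncard_le_ncard hWsub (Set.toFinite _)) hsplit
              · exfalso
                obtain ⟨s₁, hs₁⟩ := hint
                -- X ∪ X' is connected, contains X strictly, so has a large cut
                have hunconn : Conn G (X ∪ X') :=
                  conn_union_mem hXF.2.1 hX'conn hs₁.2 hs₁.1
                have hun3 : ¬ (G.delta (X ∪ X')).ncard ≤ 2 := by
                  intro h2
                  have hXX'F : X ∪ X' ∈ F :=
                    ⟨Set.union_subset hXF.1 hX'Z, hunconn, h2⟩
                  have := hmax _ hXX'F Set.subset_union_left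
                  exact hwZX.2 (this ▸ (Or.inr hwX' : w ∈ X ∪ X'))
                have hsm := delta_submod (G := G) X X'
                have hpm := delta_posimod (G := G) X X'
                have hd1 : (G.delta (X ∩ X')).ncard ≤ 1 := by
                  have := hXF.2.2; have := hX'2; omega
                have hd2 : (G.delta (X \ X')).ncard ≤ 1 := by
                  have h3 : ¬ (G.delta (X' \ X)).ncard ≤ 2 := hsplit
                  have := hXF.2.2; have := hX'2; omega
                -- a crossing edge g' inside X between X ∩ X' and X \ X'
                obtain ⟨q, hq⟩ := hXF.2.1.2 s₁ hs₁.2 s₀ hs₀X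
                have hs₁m : s₁ ∈ (X ∩ X' : Set V) := ⟨hs₁.2, hs₁.1⟩
                have hs₀m : s₀ ∉ (X ∩ X' : Set V) := fun h => hs₀X' h.2
                obtain ⟨xa, xb, g', hxa, hxb, hg', -, -, hxbsup⟩ :=
                  walk_exit q (X ∩ X') hs₁m hs₀m
                have hxbX : xb ∈ X \ X' := ⟨hq xb hxbsup, fun h => hxb ⟨hq xb hxbsup, h⟩⟩
                have hg'1 : g' ∈ G.delta (X ∩ X') :=
                  (mem_delta_iff g' hg' _).mpr (Or.inl ⟨hxa, hxb⟩)
                have hg'2 : g' ∈ G.delta (X \ X') :=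
                  (mem_delta_iff g' hg' _).mpr
                    (Or.inr ⟨hxbX, fun h => h.2 hxa.2⟩)
                -- hence δ(X) = ∅
                have hXempty : G.delta X = ∅ := by
                  rw [Set.eq_empty_iff_forall_notMem]
                  intro e he
                  have hsplitX : e ∈ G.delta (X ∩ X') ∪ G.delta (X \ X') := by
                    obtain ⟨a, b, hab⟩ := sym2_rep (G.inc e)
                    simp only [Set.mem_union, mem_delta_iff e hab, Set.mem_inter_iff,
                      Set.mem_diff] at he ⊢
                    tauto
                  have he' : e = g' := by
                    rcases hsplitX with h | h
                    · exact (Set.ncard_le_one (Set.toFinite _)).mp hd1 e h g' hg'1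
                    · exact (Set.ncard_le_one (Set.toFinite _)).mp hd2 e h g' hg'2
                  subst he'
                  rcases (mem_delta_iff e hg' X).mp he with ⟨-, h2⟩ | ⟨-, h2⟩
                  · exact h2 hxbX.1
                  · exact h2 hxa.1
                have hfin : (G.delta (X ∪ X')).ncard ≤ 2 := by
                  have hsubU : G.delta (X ∪ X') ⊆ G.delta X' := by
                    intro e he
                    rcases delta_union_sub X X' he with h | h
                    · rw [hXempty] at h; exact absurd h (Set.notMem_empty e)
                    · exact h
                  exact le_trans (Set.ncard_le_ncard hsubU (Set.toFinite _)) hX'2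
                exact hun3 hfin
          · -- X' misses X entirely : it sits inside C
            have hX'sub : X' ⊆ Z \ X := fun a ha =>
              ⟨hX'Z ha, fun haX => hint ⟨a, ha, haX⟩⟩
            refine ⟨X', hwX', ?_, hX'conn, hX'2⟩
            intro y hy
            have h1 : Reach G (Z \ X) w y := reach_mono hX'sub (hX'conn.2 w hwX' y hy)
            exact reach_trans hwC h1
        -- induction on C
        have hClt : C.ncard ≤ n := by
          have hZXlt : (Z \ X).ncard < Z.ncard := by
            refine Set.ncard_lt_ncard ?_ (Set.toFinite Z)
            rw [Set.ssubset_iff_of_subset Set.diff_subset]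
            obtain ⟨x₁, hx₁⟩ := hXF.2.1.1
            exact ⟨x₁, hXF.1 hx₁, fun h => h.2 hx₁⟩
          have := Set.ncard_le_ncard hCsub (Set.toFinite _)
          omega
        exact hCge (ih C hClt hCconn hfenC)

end Aux
end Fences
set_option maxHeartbeats 1000000 in
/-- if A is a 3-edge-connected component of G, every connected
component of G - A (here, the component of a vertex z ∉ A) has at most two edges
of G joining it to A. -/
theorem component_attached_le_two {V E : Type} [Finite V] [Finite E]
    (G : Multigraph V E) (hG : G.Loopless) (A : Set V)
    (hA : ∃ v : V, A = {w | ThreeEC G v w}) (z : V) (hz : z ∉ A) :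
    {e : E | ∃ x y : V, G.inc e = s(x, y) ∧ x ∈ A ∧ y ∉ A ∧
      ∃ p : G.Walk z y, ∀ w ∈ p.support, w ∉ A}.ncard ≤ 2 := by
  classical
  by_contra hcon
  push_neg at hcon
  obtain ⟨v, hAv⟩ := hA
  have hvA : v ∈ A := by rw [hAv]; exact Or.inl rfl
  have h3 : 3 ≤ {e : E | ∃ x y : V, G.inc e = s(x, y) ∧ x ∈ A ∧ y ∉ A ∧
      ∃ p : G.Walk z y, ∀ w ∈ p.support, w ∉ A}.ncard := hcon
  obtain ⟨T, hTS, hT3⟩ := Set.exists_subset_card_eq h3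
  -- the component of z in G - A
  set Z : Set V := {w | Aux.Reach G Aᶜ z w} with hZdef
  have hzc : z ∈ (Aᶜ : Set V) := hz
  have hzZ : z ∈ Z := Aux.reach_refl hzc
  have hTdelta : T ⊆ G.delta Z := by
    intro e he
    obtain ⟨x, y, hxy, hxA, hyA, p, hp⟩ := hTS he
    have hyZ : y ∈ Z := ⟨p, fun s hs => hp s hs⟩
    have hxZ : x ∉ Z := fun h => (Aux.reach_mem_right h : x ∈ Aᶜ) hxA
    exact (Aux.mem_delta_iff e hxy Z).mpr (Or.inr ⟨hyZ, hxZ⟩)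
  have hdZ3 : 3 ≤ (G.delta Z).ncard := by
    rw [← hT3]
    exact Set.ncard_le_ncard hTdelta (Set.toFinite _)
  have hZconn : Aux.Conn G Z := Aux.conn_component hzc
  -- there is an unfenced vertex in Z
  have hnofence : ∃ w ∈ Z, ∀ X, ¬ Aux.Fence G Z w X := by
    by_contra h
    push_neg at h
    have := Aux.lemA Z.ncard Z le_rfl hZconn h
    omega
  obtain ⟨w, hwZ, hwnof⟩ := hnofence
  have hwA : w ∉ A := (Aux.reach_mem_right hwZ : w ∈ Aᶜ)
  have hwv : v ≠ w := fun h => hwA (h ▸ hvA)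
  -- Menger hypothesis : no set of at most two edges separates v from w
  have H : ∀ F : Set E, F.ncard ≤ 2 → ∃ p : G.Walk v w, ∀ e ∈ p.edges, e ∉ F := by
    intro F hF
    set X : Set V := {x | ∃ p : G.Walk w x, ∀ e ∈ p.edges, e ∉ F} with hXd
    have hwX : w ∈ X := ⟨.nil w, by simp [Multigraph.Walk.edges]⟩
    have hXclosed : ∀ e x y, G.inc e = s(x, y) → x ∈ X → e ∉ F → y ∈ X := by
      intro e x y hxy hx heF
      obtain ⟨p, hp⟩ := hx
      refine ⟨Aux.wapp p (.cons e hxy (.nil y)), fun e' he' => ?_⟩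
      rw [Aux.wapp_edges] at he'
      simp only [List.mem_append, Multigraph.Walk.edges, List.mem_cons,
        List.not_mem_nil, or_false] at he'
      rcases he' with h | h
      · exact hp e' h
      · exact h ▸ heF
    have hdXF : G.delta X ⊆ F := by
      intro e he
      obtain ⟨x, y, hxy, hx, hy⟩ := he
      by_contra heF
      exact hy (hXclosed e x y hxy hx heF)
    by_cases hvX : v ∈ X
    · obtain ⟨p, hp⟩ := hvX
      exact ⟨Aux.wrev p, fun e he => hp e ((Aux.mem_wrev_edges p e).mp he)⟩
    · exfalso
      -- no vertex of A lies in X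
      have hAX : ∀ a ∈ A, a ∉ X := by
        intro a haA haX
        have hav : ThreeEC G v a := by rw [hAv] at haA; exact haA
        rcases hav with rfl | htp
        · exact hvX haX
        · obtain ⟨p₁, p₂, p₃, _, _, _, d12, d13, d23⟩ := htp
          have hcross : ∀ (p : G.Walk v a), ∃ e ∈ p.edges, e ∈ F := by
            intro p
            obtain ⟨x, y, e, hx, hy, hxy, hmem, -, -⟩ := Aux.walk_exit (Aux.wrev p) X haX hvX
            exact ⟨e, (Aux.mem_wrev_edges p e).mp hmem, hdXF ⟨x, y, hxy, hx, hy⟩⟩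
          obtain ⟨f₁, hf₁, hf₁F⟩ := hcross p₁
          obtain ⟨f₂, hf₂, hf₂F⟩ := hcross p₂
          obtain ⟨f₃, hf₃, hf₃F⟩ := hcross p₃
          have h12 : f₁ ≠ f₂ := fun h => d12 f₁ hf₁ (h ▸ hf₂)
          have h13 : f₁ ≠ f₃ := fun h => d13 f₁ hf₁ (h ▸ hf₃)
          have h23 : f₂ ≠ f₃ := fun h => d23 f₂ hf₂ (h ▸ hf₃)
          have hsub : ({f₁, f₂, f₃} : Set E) ⊆ F := by
            intro e he
            rcases he with rfl | rfl | rfl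
            exacts [hf₁F, hf₂F, hf₃F]
          have h3' : ({f₁, f₂, f₃} : Set E).ncard = 3 :=
            Set.ncard_eq_three.mpr ⟨f₁, f₂, f₃, h12, h13, h23, rfl⟩
          have := Set.ncard_le_ncard hsub (Set.toFinite F)
          omega
      -- X is a fence around w in Z : contradiction
      apply hwnof X
      have key : ∀ x ∈ X, Aux.Reach G X w x := by
        intro x hx
        obtain ⟨p, hp⟩ := hx
        refine ⟨p, fun s hs => ?_⟩
        obtain ⟨q, hq1, -⟩ := Aux.exists_prefix p s hs
        exact ⟨q, fun e he => hp e (hq1 e he)⟩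
      refine ⟨hwX, ?_, ?_, le_trans (Set.ncard_le_ncard hdXF (Set.toFinite F)) hF⟩
      · intro x hxX
        have hwx : Aux.Reach G Aᶜ w x := by
          obtain ⟨p, hp⟩ := key x hxX
          exact ⟨p, fun s hs => fun hsA => hAX s hsA (hp s hs)⟩
        exact Aux.reach_trans hwZ hwx
      · exact ⟨⟨w, hwX⟩, fun x hx y hy =>
          Aux.reach_trans (Aux.reach_symm (key x hx)) (key y hy)⟩
  have hfE : Fintype E := Fintype.ofFinite E
  have h3p : ThreePaths G v w := Aux.mengerCore hwv H
  have : w ∈ A := by rw [hAv]; exact Or.inr h3p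
  exact hwA this

end TCW
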